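/- If a tree T belongs to the family 𝒪, then γ(T) = γ_t2(T). -/

import Mathlib

open SimpleGraph

/-- A dominating set: every vertex outside `S` has a neighbor in `S`. -/
def IsDominatingSet {V : Type} (G : SimpleGraph V) (S : Set V) : Prop :=
  ∀ v ∉ S, ∃ u ∈ S, G.Adj u v

/-- A total dominating set: every vertex has a neighbor in `S`. -/
def IsTotalDominatingSet {V : Type} (G : SimpleGraph V) (S : Set V) : Prop :=
  ∀ v : V, ∃ u ∈ S, G.Adj u v

/-- `u` is within distance two of `v`. -/
def WithinTwo {V : Type} (G : SimpleGraph V) (u v : V) : Prop :=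
  G.Adj u v ∨ ∃ w, G.Adj u w ∧ G.Adj w v

/-- A semitotal dominating set: a dominating set in which every vertex is within
distance two of another vertex of the set. -/
def IsSemitotalDominatingSet {V : Type} (G : SimpleGraph V) (S : Set V) : Prop :=
  IsDominatingSet G S ∧ ∀ v ∈ S, ∃ u ∈ S, u ≠ v ∧ WithinTwo G u v

/-- The domination number `γ(G)`. -/
noncomputable def dominationNumber {V : Type} (G : SimpleGraph V) : ℕ :=
  sInf {n | ∃ S : Set V, IsDominatingSet G S ∧ S.ncard = n}

/-- The total domination number `γ_t(G)`. -/
noncomputable def totalDominationNumber {V : Type} (G : SimpleGraph V) : ℕ :=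
  sInf {n | ∃ S : Set V, IsTotalDominatingSet G S ∧ S.ncard = n}

/-- The semitotal domination number `γ_t2(G)`. -/
noncomputable def semitotalDominationNumber {V : Type} (G : SimpleGraph V) : ℕ :=
  sInf {n | ∃ S : Set V, IsSemitotalDominatingSet G S ∧ S.ncard = n}

/-- A leaf: a vertex of degree one. -/
def IsLeaf {V : Type} (G : SimpleGraph V) (v : V) : Prop :=
  (G.neighborSet v).ncard = 1

/-- A support vertex: a vertex adjacent to a leaf. -/
def IsSupport {V : Type} (G : SimpleGraph V) (v : V) : Prop :=
  ∃ u, G.Adj v u ∧ IsLeaf G u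

/-- A star: a graph isomorphic to `K_{1,m}` for some `m ≥ 1`. -/
def IsStar {V : Type} (G : SimpleGraph V) : Prop :=
  ∃ m : ℕ, 1 ≤ m ∧ Nonempty (G ≃g completeBipartiteGraph Unit (Fin m))

/-- The graph obtained from the disjoint union of `G` and `H` by adding
the single edge joining `v : V` to `w : W`. -/
def attach {V W : Type} (G : SimpleGraph V) (H : SimpleGraph W) (v : V) (w : W) :
    SimpleGraph (V ⊕ W) where
  Adj x y :=
    match x, y with
    | Sum.inl a, Sum.inl b => G.Adj a b
    | Sum.inr a, Sum.inr b => H.Adj a b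
    | Sum.inl a, Sum.inr b => a = v ∧ b = w
    | Sum.inr a, Sum.inl b => b = v ∧ a = w
  symm := by
    constructor
    rintro (a | a) (b | b) h
    · exact G.adj_symm h
    · exact ⟨h.1, h.2⟩
    · exact ⟨h.1, h.2⟩
    · exact H.adj_symm h
  loopless := by
    constructor
    rintro (a | a) h
    · exact G.ne_of_adj h rfl
    · exact H.ne_of_adj h rfl

/-- The statuses used to label the vertices of trees in the family `𝒯`. -/
inductive Label : Type
  | A | B | C
deriving DecidableEq

/-- The labeling of the path `P₅` assigning `A` to the two support vertices,
`C` to the two leaves and `B` to the center. -/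
def pathLabel : Fin 5 → Label
  | 0 => Label.C
  | 1 => Label.A
  | 2 => Label.B
  | 3 => Label.A
  | 4 => Label.C

/-- The family `𝒯` of labeled trees: it contains the labeled path `P₅`, and is closed
under operation `𝒪₁` (attach a new leaf labeled `C` to a vertex labeled `A`), operation
`𝒪₂` (attach a labeled path `P₅` to a degree-one vertex labeled `C`), and under
isomorphism of labeled graphs. -/
inductive TFamily : ∀ {V : Type}, SimpleGraph V → (V → Label) → Prop
  | base : TFamily (SimpleGraph.pathGraph 5) pathLabel
  | op1 {V : Type} {G : SimpleGraph V} {f : V → Label} (v : V)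
      (hv : f v = Label.A) (h : TFamily G f) :
      TFamily (attach G (⊥ : SimpleGraph (Fin 1)) v 0)
        (Sum.elim f (fun _ => Label.C))
  | op2 {V : Type} {G : SimpleGraph V} {f : V → Label} (v : V)
      (hv : f v = Label.C) (hdeg : (G.neighborSet v).ncard = 1) (h : TFamily G f) :
      TFamily (attach G (SimpleGraph.pathGraph 5) v 0) (Sum.elim f pathLabel)
  | iso {V W : Type} {G : SimpleGraph V} {H : SimpleGraph W} {f : V → Label}
      (e : G ≃g H) (h : TFamily G f) : TFamily H (fun w => f (e.symm w))

/-- The subdivided star with `t` leaves: center `none`, and for each `i : Fin t`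
a path `none — some (i,0) — some (i,1)`. -/
def subdividedStar (t : ℕ) : SimpleGraph (Option (Fin t × Fin 2)) :=
  SimpleGraph.fromRel (fun x y =>
    match x, y with
    | none, some p => p.2 = 0
    | some p, some q => p.1 = q.1 ∧ p.2 = 0 ∧ q.2 = 1
    | _, _ => False)

/-- The tree `Y` with three leaves, obtained from the star `K_{1,3}` with center `0`
by subdividing exactly one edge: edges `0-1`, `0-2`, `0-3`, `3-4`.  Its leaves are
`1`, `2`, `4`; the leaf-neighbors of the center are `1` and `2`. -/
def Ytree : SimpleGraph (Fin 5) :=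
  SimpleGraph.fromRel (fun x y =>
    (x = 0 ∧ y = 1) ∨ (x = 0 ∧ y = 2) ∨ (x = 0 ∧ y = 3) ∨ (x = 3 ∧ y = 4))

/-- An almost dominating set of `G` relative to `v`: dominates every vertex except
possibly `v`. -/
def IsAlmostDominatingSet {V : Type} (G : SimpleGraph V) (v : V) (S : Set V) : Prop :=
  ∀ w, w ≠ v → w ∉ S → ∃ u ∈ S, G.Adj u w

/-- The almost domination number `γ(G; v)`. -/
noncomputable def almostDominationNumber {V : Type} (G : SimpleGraph V) (v : V) : ℕ :=
  sInf {n | ∃ S : Set V, IsAlmostDominatingSet G v S ∧ S.ncard = n}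

/-- The family `𝒪` of trees: all trees obtainable from the path `P₄` by a finite
sequence of the operations `𝒪₁`–`𝒪₄` (and taking isomorphic copies). -/
inductive OFamily : ∀ {V : Type}, SimpleGraph V → Prop
  | base : OFamily (SimpleGraph.pathGraph 4)
  | op1 {V : Type} {G : SimpleGraph V} (v : V)
      (hv : ∃ S : Set V, IsSemitotalDominatingSet G S ∧
        S.ncard = semitotalDominationNumber G ∧ v ∈ S)
      (h : OFamily G) :
      OFamily (attach G (⊥ : SimpleGraph (Fin 1)) v 0)
  | op2short {V : Type} {G : SimpleGraph V} (v : V)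
      (hv : almostDominationNumber G v = dominationNumber G) (h : OFamily G) :
      OFamily (attach G (SimpleGraph.pathGraph 2) v 0)
  | op2long {V : Type} {G : SimpleGraph V} (v : V)
      (hv : almostDominationNumber G v = dominationNumber G) (h : OFamily G) :
      OFamily (attach G (SimpleGraph.pathGraph 5) v 0)
  | op3 {V : Type} {G : SimpleGraph V} (v : V) (t : ℕ) (ht : 2 ≤ t) (h : OFamily G) :
      OFamily (attach G (subdividedStar t) v none)
  | op4 {V : Type} {G : SimpleGraph V} (v : V) (h : OFamily G) :
      OFamily (attach G Ytree v 1)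
  | iso {V W : Type} {G : SimpleGraph V} {H : SimpleGraph W}
      (e : G ≃g H) (h : OFamily G) : OFamily H

open Set Sum

section helpers
variable {V : Type} {G : SimpleGraph V}

lemma univ_dom : IsDominatingSet G Set.univ := fun v hv => absurd (mem_univ v) hv

lemma domN_le {S : Set V} (h : IsDominatingSet G S) : dominationNumber G ≤ S.ncard :=
  Nat.sInf_le ⟨S, h, rfl⟩

lemma stdomN_le {S : Set V} (h : IsSemitotalDominatingSet G S) :
    semitotalDominationNumber G ≤ S.ncard := Nat.sInf_le ⟨S, h, rfl⟩

lemma almostN_le {v : V} {S : Set V} (h : IsAlmostDominatingSet G v S) :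
    almostDominationNumber G v ≤ S.ncard := Nat.sInf_le ⟨S, h, rfl⟩

lemma exists_dom_min (G : SimpleGraph V) :
    ∃ S, IsDominatingSet G S ∧ S.ncard = dominationNumber G := by
  have : dominationNumber G ∈ {n | ∃ S : Set V, IsDominatingSet G S ∧ S.ncard = n} :=
    Nat.sInf_mem ⟨_, Set.univ, univ_dom, rfl⟩
  obtain ⟨S, hS, hc⟩ := this
  exact ⟨S, hS, hc⟩

lemma exists_stdom_min (hne : ∃ S, IsSemitotalDominatingSet G S) :
    ∃ S, IsSemitotalDominatingSet G S ∧ S.ncard = semitotalDominationNumber G := by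
  obtain ⟨S0, hS0⟩ := hne
  have : semitotalDominationNumber G ∈
      {n | ∃ S : Set V, IsSemitotalDominatingSet G S ∧ S.ncard = n} :=
    Nat.sInf_mem ⟨_, S0, hS0, rfl⟩
  obtain ⟨S, hS, hc⟩ := this
  exact ⟨S, hS, hc⟩

lemma exists_almost_min (G : SimpleGraph V) (v : V) :
    ∃ S, IsAlmostDominatingSet G v S ∧ S.ncard = almostDominationNumber G v := by
  have : almostDominationNumber G v ∈
      {n | ∃ S : Set V, IsAlmostDominatingSet G v S ∧ S.ncard = n} :=
    Nat.sInf_mem ⟨_, Set.univ, fun w _ hw => absurd (mem_univ w) hw, rfl⟩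
  obtain ⟨S, hS, hc⟩ := this
  exact ⟨S, hS, hc⟩

lemma domN_le_almost_add_one [Finite V] (G : SimpleGraph V) (v : V) :
    dominationNumber G ≤ almostDominationNumber G v + 1 := by
  obtain ⟨S, hS, hc⟩ := exists_almost_min G v
  have hdom : IsDominatingSet G (insert v S) := by
    intro w hw
    have hwv : w ≠ v := fun h => hw (h ▸ mem_insert v S)
    obtain ⟨u, hu, hadj⟩ := hS w hwv (fun h => hw (mem_insert_of_mem _ h))
    exact ⟨u, mem_insert_of_mem _ hu, hadj⟩
  calc dominationNumber G ≤ (insert v S).ncard := domN_le hdom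
    _ ≤ S.ncard + 1 := Set.ncard_insert_le v S
    _ = almostDominationNumber G v + 1 := by rw [hc]

/-- The key invariant carried through the induction. -/
def Good {V : Type} (G : SimpleGraph V) : Prop :=
  Finite V ∧ ∃ S, IsSemitotalDominatingSet G S ∧ S.ncard = dominationNumber G

lemma Good.eq (h : Good G) : dominationNumber G = semitotalDominationNumber G := by
  obtain ⟨_, S, hS, hc⟩ := h
  have h1 : semitotalDominationNumber G ≤ dominationNumber G := hc ▸ stdomN_le hS
  obtain ⟨S0, hS0, hc0⟩ := exists_stdom_min ⟨S, hS⟩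
  have h2 : dominationNumber G ≤ semitotalDominationNumber G := hc0 ▸ domN_le hS0.1
  omega

end helpers
section attachLemmas
variable {V W : Type} {G : SimpleGraph V} {H : SimpleGraph W} {v : V} {w : W}

lemma attach_adj_ll {a b : V} : (attach G H v w).Adj (Sum.inl a) (Sum.inl b) ↔ G.Adj a b :=
  Iff.rfl

lemma attach_adj_rr {a b : W} : (attach G H v w).Adj (Sum.inr a) (Sum.inr b) ↔ H.Adj a b :=
  Iff.rfl

lemma attach_adj_lr {a : V} {b : W} :
    (attach G H v w).Adj (Sum.inl a) (Sum.inr b) ↔ a = v ∧ b = w := Iff.rfl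

lemma attach_adj_rl {a : W} {b : V} :
    (attach G H v w).Adj (Sum.inr a) (Sum.inl b) ↔ b = v ∧ a = w := Iff.rfl

lemma preimage_ncard_sum_le [Finite V] [Finite W] (D : Set (V ⊕ W)) :
    (Sum.inl ⁻¹' D).ncard + (Sum.inr ⁻¹' D).ncard ≤ D.ncard := by
  have h1 : (Sum.inl ⁻¹' D).ncard = (Sum.inl '' (Sum.inl ⁻¹' D) : Set (V ⊕ W)).ncard :=
    (Set.ncard_image_of_injective _ Sum.inl_injective).symm
  have h2 : (Sum.inr ⁻¹' D).ncard = (Sum.inr '' (Sum.inr ⁻¹' D) : Set (V ⊕ W)).ncard :=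
    (Set.ncard_image_of_injective _ Sum.inr_injective).symm
  have hdisj : Disjoint (Sum.inl '' (Sum.inl ⁻¹' D) : Set (V ⊕ W))
      (Sum.inr '' (Sum.inr ⁻¹' D)) := by
    rw [Set.disjoint_left]
    rintro x ⟨a, -, rfl⟩ ⟨b, -, hb⟩
    exact Sum.inl_ne_inr hb.symm
  have hsub : (Sum.inl '' (Sum.inl ⁻¹' D) ∪ Sum.inr '' (Sum.inr ⁻¹' D) : Set (V ⊕ W)) ⊆ D := by
    rintro x (⟨a, ha, rfl⟩ | ⟨a, ha, rfl⟩) <;> exact ha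
  calc (Sum.inl ⁻¹' D).ncard + (Sum.inr ⁻¹' D).ncard
      = (Sum.inl '' (Sum.inl ⁻¹' D) ∪ Sum.inr '' (Sum.inr ⁻¹' D) : Set (V ⊕ W)).ncard := by
        rw [h1, h2, Set.ncard_union_eq hdisj (Set.toFinite _) (Set.toFinite _)]
    _ ≤ D.ncard := Set.ncard_le_ncard hsub (Set.toFinite _)

lemma pullback_almost {D : Set (V ⊕ W)} (hD : IsDominatingSet (attach G H v w) D) :
    IsAlmostDominatingSet G v (Sum.inl ⁻¹' D) := by
  intro u huv hu
  obtain ⟨x, hx, hadj⟩ := hD (Sum.inl u) hu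
  rcases x with a | b
  · exact ⟨a, hx, hadj⟩
  · exact absurd (attach_adj_rl.mp hadj).1 huv

lemma pullback_dom_of_not {D : Set (V ⊕ W)} (hD : IsDominatingSet (attach G H v w) D)
    (hw : Sum.inr w ∉ D) : IsDominatingSet G (Sum.inl ⁻¹' D) := by
  intro u hu
  obtain ⟨x, hx, hadj⟩ := hD (Sum.inl u) hu
  rcases x with a | b
  · exact ⟨a, hx, hadj⟩
  · obtain ⟨-, rfl⟩ := attach_adj_rl.mp hadj
    exact absurd hx hw

lemma pullback_dom_le [Finite V] [Finite W] {D : Set (V ⊕ W)}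
    (hD : IsDominatingSet (attach G H v w) D) : dominationNumber G ≤ D.ncard := by
  by_cases hw : Sum.inr w ∈ D
  · have hdom : IsDominatingSet G (insert v (Sum.inl ⁻¹' D)) := by
      intro u hu
      have huv : u ≠ v := by rintro rfl; exact hu (mem_insert _ _)
      obtain ⟨s, hs, hadj⟩ := pullback_almost hD u huv (fun h => hu (mem_insert_of_mem _ h))
      exact ⟨s, mem_insert_of_mem _ hs, hadj⟩
    have h1 : 1 ≤ (Sum.inr ⁻¹' D : Set W).ncard :=
      (Set.ncard_pos (Set.toFinite _)).mpr ⟨w, hw⟩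
    calc dominationNumber G ≤ (insert v (Sum.inl ⁻¹' D)).ncard := domN_le hdom
      _ ≤ (Sum.inl ⁻¹' D).ncard + 1 := Set.ncard_insert_le _ _
      _ ≤ (Sum.inl ⁻¹' D).ncard + (Sum.inr ⁻¹' D).ncard := by omega
      _ ≤ D.ncard := preimage_ncard_sum_le D
  · calc dominationNumber G ≤ (Sum.inl ⁻¹' D).ncard := domN_le (pullback_dom_of_not hD hw)
      _ ≤ (Sum.inl ⁻¹' D).ncard + (Sum.inr ⁻¹' D).ncard := Nat.le_add_right _ _
      _ ≤ D.ncard := preimage_ncard_sum_le D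

lemma withinTwo_inl {a b : V} (h : WithinTwo G a b) :
    WithinTwo (attach G H v w) (Sum.inl a) (Sum.inl b) := by
  rcases h with h | ⟨c, h1, h2⟩
  · exact Or.inl h
  · exact Or.inr ⟨Sum.inl c, h1, h2⟩

/-- Extending a semitotal dominating set of `G` by a set of `inr`-vertices. -/
lemma semitotal_extend {S : Set V} (hS : IsSemitotalDominatingSet G S) (N : Set (V ⊕ W))
    (_hN : ∀ x ∈ N, ∃ b, x = Sum.inr b)
    (hdomW : ∀ b : W, Sum.inr b ∈ Sum.inl '' S ∪ N ∨
      ∃ u ∈ Sum.inl '' S ∪ N, (attach G H v w).Adj u (Sum.inr b))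
    (hwit : ∀ x ∈ N, ∃ u ∈ Sum.inl '' S ∪ N, u ≠ x ∧ WithinTwo (attach G H v w) u x) :
    IsSemitotalDominatingSet (attach G H v w) (Sum.inl '' S ∪ N) := by
  constructor
  · rintro (a | b) hx
    · have ha : a ∉ S := fun h => hx (Or.inl ⟨a, h, rfl⟩)
      obtain ⟨s, hs, hadj⟩ := hS.1 a ha
      exact ⟨Sum.inl s, Or.inl ⟨s, hs, rfl⟩, hadj⟩
    · rcases hdomW b with h | ⟨u, hu, hadj⟩
      · exact absurd h hx
      · exact ⟨u, hu, hadj⟩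
  · rintro x (⟨a, ha, rfl⟩ | hx)
    · obtain ⟨u, hu, hne, hw2⟩ := hS.2 a ha
      exact ⟨Sum.inl u, Or.inl ⟨u, hu, rfl⟩, fun h => hne (Sum.inl_injective h),
        withinTwo_inl hw2⟩
    · exact hwit x hx

lemma inl_image_ncard {S : Set V} :
    (Sum.inl '' S : Set (V ⊕ W)).ncard = S.ncard :=
  Set.ncard_image_of_injective _ Sum.inl_injective

lemma inr_not_mem_inl_image {S : Set V} (b : W) :
    Sum.inr b ∉ (Sum.inl '' S : Set (V ⊕ W)) := by
  rintro ⟨a, -, h⟩; exact Sum.inl_ne_inr h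

end attachLemmas
section isoLemmas
variable {V W : Type} {G : SimpleGraph V} {H : SimpleGraph W}

lemma dom_map (e : G ≃g H) {S : Set V} (h : IsDominatingSet G S) :
    IsDominatingSet H ((fun x => e x) '' S) := by
  intro x hx
  have hx' : e.symm x ∉ S := fun hm => hx ⟨e.symm x, hm, e.apply_symm_apply x⟩
  obtain ⟨u, hu, hadj⟩ := h (e.symm x) hx'
  refine ⟨e u, ⟨u, hu, rfl⟩, ?_⟩
  have := e.map_adj_iff.mpr hadj
  rwa [e.apply_symm_apply] at this

lemma withinTwo_map (e : G ≃g H) {a b : V} (h : WithinTwo G a b) :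
    WithinTwo H (e a) (e b) := by
  rcases h with h | ⟨c, h1, h2⟩
  · exact Or.inl (e.map_adj_iff.mpr h)
  · exact Or.inr ⟨e c, e.map_adj_iff.mpr h1, e.map_adj_iff.mpr h2⟩

lemma semitotal_map (e : G ≃g H) {S : Set V} (h : IsSemitotalDominatingSet G S) :
    IsSemitotalDominatingSet H ((fun x => e x) '' S) := by
  refine ⟨dom_map e h.1, ?_⟩
  rintro x ⟨a, ha, rfl⟩
  obtain ⟨u, hu, hne, hw⟩ := h.2 a ha
  exact ⟨e u, ⟨u, hu, rfl⟩, fun hh => hne (e.toEquiv.injective hh), withinTwo_map e hw⟩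

lemma domN_iso (e : G ≃g H) : dominationNumber G = dominationNumber H := by
  unfold dominationNumber
  congr 1
  ext n
  constructor
  · rintro ⟨S, hS, rfl⟩
    exact ⟨_, dom_map e hS, Set.ncard_image_of_injective _ e.toEquiv.injective⟩
  · rintro ⟨S, hS, rfl⟩
    exact ⟨_, dom_map e.symm hS, Set.ncard_image_of_injective _ e.symm.toEquiv.injective⟩

lemma good_iso (e : G ≃g H) (h : Good G) : Good H := by
  obtain ⟨hfin, S, hS, hc⟩ := h
  refine ⟨Finite.of_equiv V e.toEquiv, (fun x => e x) '' S, semitotal_map e hS, ?_⟩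
  have : ((fun x => e x) '' S).ncard = S.ncard :=
    Set.ncard_image_of_injective _ e.toEquiv.injective
  rw [this, hc, domN_iso e]

end isoLemmas
section baseCase

lemma p4_adj {u v : Fin 4} :
    (SimpleGraph.pathGraph 4).Adj u v ↔ u.val + 1 = v.val ∨ v.val + 1 = u.val :=
  SimpleGraph.pathGraph_adj

lemma p4_semitotal : IsSemitotalDominatingSet (SimpleGraph.pathGraph 4) {1, 2} := by
  constructor
  · intro x hx
    simp only [Set.mem_insert_iff, Set.mem_singleton_iff, not_or] at hx
    have h1 : x.val ≠ 1 := fun h => hx.1 (Fin.ext h)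
    have h2 : x.val ≠ 2 := fun h => hx.2 (Fin.ext h)
    have h3 := x.isLt
    have : x.val = 0 ∨ x.val = 3 := by omega
    rcases this with h | h
    · exact ⟨1, Or.inl rfl, p4_adj.mpr (Or.inr (by omega))⟩
    · exact ⟨2, Or.inr rfl, p4_adj.mpr (Or.inl (by omega))⟩
  · rintro x (rfl | rfl)
    · exact ⟨2, Or.inr rfl, by decide, Or.inl (p4_adj.mpr (Or.inr (by decide)))⟩
    · exact ⟨1, Or.inl rfl, by decide, Or.inl (p4_adj.mpr (Or.inl (by decide)))⟩

lemma p4_domN : dominationNumber (SimpleGraph.pathGraph 4) = 2 := by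
  have hle : dominationNumber (SimpleGraph.pathGraph 4) ≤ 2 := by
    have := domN_le p4_semitotal.1
    have h2 : ({1, 2} : Set (Fin 4)).ncard = 2 := by
      rw [Set.ncard_insert_of_notMem (by decide), Set.ncard_singleton]
    omega
  have hge : 2 ≤ dominationNumber (SimpleGraph.pathGraph 4) := by
    obtain ⟨D, hD, hc⟩ := exists_dom_min (SimpleGraph.pathGraph 4)
    rw [← hc]
    have ha : ∃ a ∈ D, a = 0 ∨ a = 1 := by
      by_cases h0 : (0 : Fin 4) ∈ D
      · exact ⟨0, h0, Or.inl rfl⟩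
      · obtain ⟨u, hu, hadj⟩ := hD 0 h0
        refine ⟨u, hu, Or.inr ?_⟩
        have hval : u.val + 1 = (0 : Fin 4).val ∨ (0 : Fin 4).val + 1 = u.val := p4_adj.mp hadj
        have h0v : (0 : Fin 4).val = 0 := rfl
        have h1v : (1 : Fin 4).val = 1 := rfl
        exact Fin.ext (by omega)
    have hb : ∃ b ∈ D, b = 2 ∨ b = 3 := by
      by_cases h3 : (3 : Fin 4) ∈ D
      · exact ⟨3, h3, Or.inr rfl⟩
      · obtain ⟨u, hu, hadj⟩ := hD 3 h3
        refine ⟨u, hu, Or.inl ?_⟩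
        have hval : u.val + 1 = (3 : Fin 4).val ∨ (3 : Fin 4).val + 1 = u.val := p4_adj.mp hadj
        have h3v : (3 : Fin 4).val = 3 := rfl
        have h2v : (2 : Fin 4).val = 2 := rfl
        have := u.isLt
        exact Fin.ext (by omega)
    obtain ⟨a, haD, ha⟩ := ha
    obtain ⟨b, hbD, hb⟩ := hb
    have hne : a ≠ b := by
      rcases ha with rfl | rfl <;> rcases hb with rfl | rfl <;> decide
    exact (Set.one_lt_ncard (Set.toFinite _)).mpr ⟨a, haD, b, hbD, hne⟩
  omega

lemma good_base : Good (SimpleGraph.pathGraph 4) := by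
  refine ⟨inferInstance, {1, 2}, p4_semitotal, ?_⟩
  rw [p4_domN, Set.ncard_insert_of_notMem (by decide), Set.ncard_singleton]

end baseCase
section op1
variable {V : Type} {G : SimpleGraph V}

lemma good_op1 (v : V)
    (hv : ∃ S : Set V, IsSemitotalDominatingSet G S ∧
      S.ncard = semitotalDominationNumber G ∧ v ∈ S)
    (hG : Good G) : Good (attach G (⊥ : SimpleGraph (Fin 1)) v 0) := by
  haveI : Finite V := hG.1
  obtain ⟨S, hS, hc, hvS⟩ := hv
  have hcg : S.ncard = dominationNumber G := by rw [hc, ← hG.eq]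
  have hsem : IsSemitotalDominatingSet (attach G (⊥ : SimpleGraph (Fin 1)) v 0)
      (Sum.inl '' S ∪ ∅) := by
    refine semitotal_extend hS ∅ (by simp) ?_ ?_
    · intro b
      refine Or.inr ⟨Sum.inl v, Or.inl ⟨v, hvS, rfl⟩, attach_adj_lr.mpr ⟨rfl, ?_⟩⟩
      exact Subsingleton.elim b 0
    · rintro x hx; exact absurd hx (Set.notMem_empty x)
  rw [Set.union_empty] at hsem
  have h1 : dominationNumber (attach G (⊥ : SimpleGraph (Fin 1)) v 0) ≤ S.ncard := by
    have := domN_le hsem.1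
    rwa [inl_image_ncard] at this
  have h2 : dominationNumber G ≤ dominationNumber (attach G (⊥ : SimpleGraph (Fin 1)) v 0) := by
    obtain ⟨D, hD, hcD⟩ := exists_dom_min (attach G (⊥ : SimpleGraph (Fin 1)) v 0)
    rw [← hcD]
    exact pullback_dom_le hD
  refine ⟨inferInstance, Sum.inl '' S, hsem, ?_⟩
  rw [inl_image_ncard]
  omega

end op1
lemma fin2_cases : ∀ b : Fin 2, b = 0 ∨ b = 1 := by decide
lemma fin5_cases : ∀ b : Fin 5, b = 0 ∨ b = 1 ∨ b = 2 ∨ b = 3 ∨ b = 4 := by decide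

section op2short
variable {V : Type} {G : SimpleGraph V}

lemma good_op2short (v : V) (hv : almostDominationNumber G v = dominationNumber G)
    (hG : Good G) : Good (attach G (SimpleGraph.pathGraph 2) v 0) := by
  haveI : Finite V := hG.1
  obtain ⟨-, S, hS, hc⟩ := hG
  set A := attach G (SimpleGraph.pathGraph 2) v 0 with hA
  have hsem : IsSemitotalDominatingSet A (Sum.inl '' S ∪ {Sum.inr 0}) := by
    refine semitotal_extend hS {Sum.inr 0} (fun x hx => ⟨0, hx⟩) ?_ ?_
    · intro b
      rcases fin2_cases b with rfl | rfl
      · exact Or.inl (Or.inr rfl)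
      · exact Or.inr ⟨Sum.inr 0, Or.inr rfl,
          attach_adj_rr.mpr (SimpleGraph.pathGraph_adj.mpr (Or.inl rfl))⟩
    · rintro x rfl
      by_cases hvS : v ∈ S
      · exact ⟨Sum.inl v, Or.inl ⟨v, hvS, rfl⟩, Sum.inl_ne_inr,
          Or.inl (attach_adj_lr.mpr ⟨rfl, rfl⟩)⟩
      · obtain ⟨s, hs, hadj⟩ := hS.1 v hvS
        exact ⟨Sum.inl s, Or.inl ⟨s, hs, rfl⟩, Sum.inl_ne_inr,
          Or.inr ⟨Sum.inl v, hadj, attach_adj_lr.mpr ⟨rfl, rfl⟩⟩⟩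
  have hcard : (Sum.inl '' S ∪ {Sum.inr 0} : Set (V ⊕ Fin 2)).ncard = S.ncard + 1 := by
    rw [Set.union_singleton,
      Set.ncard_insert_of_notMem (inr_not_mem_inl_image 0) (Set.toFinite _), inl_image_ncard]
  have hup : dominationNumber A ≤ S.ncard + 1 := by
    have h := domN_le hsem.1
    rw [hcard] at h; exact h
  have hlow : dominationNumber G + 1 ≤ dominationNumber A := by
    obtain ⟨D, hD, hcD⟩ := exists_dom_min A
    rw [← hcD]
    have h1 : dominationNumber G ≤ (Sum.inl ⁻¹' D).ncard := by
      rw [← hv]; exact almostN_le (pullback_almost hD)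
    have h2 : 1 ≤ (Sum.inr ⁻¹' D : Set (Fin 2)).ncard := by
      have hne : (Sum.inr ⁻¹' D : Set (Fin 2)).Nonempty := by
        by_cases h1m : Sum.inr 1 ∈ D
        · exact ⟨1, h1m⟩
        · obtain ⟨x, hx, hadj⟩ := hD _ h1m
          rcases x with a | b
          · exact absurd (attach_adj_lr.mp hadj).2 (by decide)
          · exact ⟨b, hx⟩
      exact (Set.ncard_pos (Set.toFinite _)).mpr hne
    have h3 := preimage_ncard_sum_le D
    omega
  refine ⟨inferInstance, _, hsem, ?_⟩
  rw [hcard, hc]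
  omega

end op2short
section op2long
variable {V : Type} {G : SimpleGraph V}

lemma p5_adj {u v : Fin 5} :
    (SimpleGraph.pathGraph 5).Adj u v ↔ u.val + 1 = v.val ∨ v.val + 1 = u.val :=
  SimpleGraph.pathGraph_adj

lemma good_op2long (v : V) (hv : almostDominationNumber G v = dominationNumber G)
    (hG : Good G) : Good (attach G (SimpleGraph.pathGraph 5) v 0) := by
  haveI : Finite V := hG.1
  obtain ⟨-, S, hS, hc⟩ := hG
  set A := attach G (SimpleGraph.pathGraph 5) v 0 with hA
  have hsem : IsSemitotalDominatingSet A (Sum.inl '' S ∪ {Sum.inr 1, Sum.inr 3}) := by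
    refine semitotal_extend hS {Sum.inr 1, Sum.inr 3} ?_ ?_ ?_
    · rintro x (rfl | rfl) <;> exact ⟨_, rfl⟩
    · intro b
      rcases fin5_cases b with rfl | rfl | rfl | rfl | rfl
      · exact Or.inr ⟨Sum.inr 1, Or.inr (Or.inl rfl),
          attach_adj_rr.mpr (p5_adj.mpr (Or.inr rfl))⟩
      · exact Or.inl (Or.inr (Or.inl rfl))
      · exact Or.inr ⟨Sum.inr 1, Or.inr (Or.inl rfl),
          attach_adj_rr.mpr (p5_adj.mpr (Or.inl rfl))⟩
      · exact Or.inl (Or.inr (Or.inr rfl))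
      · exact Or.inr ⟨Sum.inr 3, Or.inr (Or.inr rfl),
          attach_adj_rr.mpr (p5_adj.mpr (Or.inl rfl))⟩
    · rintro x (rfl | rfl)
      · refine ⟨Sum.inr 3, Or.inr (Or.inr rfl),
          fun h => (by decide : ¬((3 : Fin 5) = 1)) (Sum.inr_injective h), Or.inr
          ⟨Sum.inr 2, attach_adj_rr.mpr (p5_adj.mpr (Or.inr rfl)),
            attach_adj_rr.mpr (p5_adj.mpr (Or.inr rfl))⟩⟩
      · refine ⟨Sum.inr 1, Or.inr (Or.inl rfl),
          fun h => (by decide : ¬((1 : Fin 5) = 3)) (Sum.inr_injective h), Or.inr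
          ⟨Sum.inr 2, attach_adj_rr.mpr (p5_adj.mpr (Or.inl rfl)),
            attach_adj_rr.mpr (p5_adj.mpr (Or.inl rfl))⟩⟩
  have hset : (Sum.inl '' S ∪ {Sum.inr 1, Sum.inr 3} : Set (V ⊕ Fin 5)) =
      insert (Sum.inr 1) (insert (Sum.inr 3) (Sum.inl '' S)) := by
    rw [Set.union_insert, Set.union_singleton]
  have hn1 : (Sum.inr 1 : V ⊕ Fin 5) ∉ insert (Sum.inr 3) (Sum.inl '' S) := by
    rintro (h | h)
    · exact (by decide : ¬((1 : Fin 5) = 3)) (Sum.inr_injective h)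
    · exact inr_not_mem_inl_image 1 h
  have hcard : (Sum.inl '' S ∪ {Sum.inr 1, Sum.inr 3} : Set (V ⊕ Fin 5)).ncard
      = S.ncard + 2 := by
    rw [hset, Set.ncard_insert_of_notMem hn1 (Set.toFinite _),
      Set.ncard_insert_of_notMem (inr_not_mem_inl_image 3) (Set.toFinite _), inl_image_ncard]
  have hup : dominationNumber A ≤ S.ncard + 2 := by
    have h := domN_le hsem.1
    rw [hcard] at h; exact h
  have hlow : dominationNumber G + 2 ≤ dominationNumber A := by
    obtain ⟨D, hD, hcD⟩ := exists_dom_min A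
    rw [← hcD]
    have h1 : dominationNumber G ≤ (Sum.inl ⁻¹' D).ncard := by
      rw [← hv]; exact almostN_le (pullback_almost hD)
    have ha : ∃ a ∈ (Sum.inr ⁻¹' D : Set (Fin 5)), a.val ≤ 2 := by
      by_cases hm : Sum.inr 1 ∈ D
      · exact ⟨1, hm, by decide⟩
      · obtain ⟨x, hx, hadj⟩ := hD _ hm
        rcases x with a | b
        · exact absurd (attach_adj_lr.mp hadj).2 (by decide)
        · refine ⟨b, hx, ?_⟩
          have hval : b.val + 1 = (1 : Fin 5).val ∨ (1 : Fin 5).val + 1 = b.val :=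
            p5_adj.mp (attach_adj_rr.mp hadj)
          have : (1 : Fin 5).val = 1 := rfl
          omega
    have hb : ∃ b ∈ (Sum.inr ⁻¹' D : Set (Fin 5)), 3 ≤ b.val := by
      by_cases hm : Sum.inr 4 ∈ D
      · exact ⟨4, hm, by decide⟩
      · obtain ⟨x, hx, hadj⟩ := hD _ hm
        rcases x with a | b
        · exact absurd (attach_adj_lr.mp hadj).2 (by decide)
        · refine ⟨b, hx, ?_⟩
          have hval : b.val + 1 = (4 : Fin 5).val ∨ (4 : Fin 5).val + 1 = b.val :=
            p5_adj.mp (attach_adj_rr.mp hadj)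
          have : (4 : Fin 5).val = 4 := rfl
          have := b.isLt
          omega
    obtain ⟨a, haD, hav⟩ := ha
    obtain ⟨b, hbD, hbv⟩ := hb
    have h2 : 1 < (Sum.inr ⁻¹' D : Set (Fin 5)).ncard :=
      (Set.one_lt_ncard (Set.toFinite _)).mpr
        ⟨a, haD, b, hbD, fun h => by rw [h] at hav; omega⟩
    have h3 := preimage_ncard_sum_le D
    omega
  refine ⟨inferInstance, _, hsem, ?_⟩
  rw [hcard, hc]
  omega

end op2long
section op3
variable {V : Type} {G : SimpleGraph V}

lemma star_adj {t : ℕ} {x y : Option (Fin t × Fin 2)} :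
    (subdividedStar t).Adj x y ↔ x ≠ y ∧
      ((match x, y with
        | none, some p => p.2 = 0
        | some p, some q => p.1 = q.1 ∧ p.2 = 0 ∧ q.2 = 1
        | _, _ => False) ∨
       (match y, x with
        | none, some p => p.2 = 0
        | some p, some q => p.1 = q.1 ∧ p.2 = 0 ∧ q.2 = 1
        | _, _ => False)) := by
  rw [subdividedStar, SimpleGraph.fromRel_adj]

lemma star_leaf_adj {t : ℕ} {i : Fin t} {x : Option (Fin t × Fin 2)}
    (h : (subdividedStar t).Adj x (some (i, 1))) : x = some (i, 0) := by
  rw [star_adj] at h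
  obtain ⟨hne, hrel⟩ := h
  rcases x with _ | p
  · rcases hrel with h | h
    · have h' : (1 : Fin 2) = 0 := h
      exact absurd h' (by decide)
    · exact h.elim
  · rcases hrel with ⟨h1, h2, -⟩ | ⟨-, h, -⟩
    · exact congrArg some (Prod.ext h1 h2)
    · have h' : (1 : Fin 2) = 0 := h
      exact absurd h' (by decide)

lemma good_op3 (v : V) (t : ℕ) (ht : 2 ≤ t) (hG : Good G) :
    Good (attach G (subdividedStar t) v none) := by
  classical
  haveI : Finite V := hG.1
  obtain ⟨-, S, hS, hc⟩ := hG
  set A := attach G (subdividedStar t) v none with hA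
  set N : Set (V ⊕ Option (Fin t × Fin 2)) :=
    (fun i : Fin t => (Sum.inr (some (i, 0)) : V ⊕ Option (Fin t × Fin 2))) '' Set.univ
    with hN
  have h0t : 0 < t := by omega
  haveI : Nontrivial (Fin t) :=
    ⟨⟨⟨0, h0t⟩, ⟨1, by omega⟩, by simp [Fin.ext_iff]⟩⟩
  have hinj : Function.Injective
      (fun i : Fin t => (Sum.inr (some (i, 0)) : V ⊕ Option (Fin t × Fin 2))) := by
    intro i j h
    have h1 := Option.some_injective _ (Sum.inr_injective h)
    exact congrArg Prod.fst h1
  have hsem : IsSemitotalDominatingSet A (Sum.inl '' S ∪ N) := by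
    refine semitotal_extend hS N ?_ ?_ ?_
    · rintro x ⟨i, -, rfl⟩; exact ⟨_, rfl⟩
    · rintro (_ | ⟨i, j⟩)
      · refine Or.inr ⟨Sum.inr (some (⟨0, h0t⟩, 0)), Or.inr ⟨_, mem_univ _, rfl⟩,
          attach_adj_rr.mpr (star_adj.mpr ⟨Option.some_ne_none _, Or.inr rfl⟩)⟩
      · rcases fin2_cases j with rfl | rfl
        · exact Or.inl (Or.inr ⟨i, mem_univ _, rfl⟩)
        · exact Or.inr ⟨Sum.inr (some (i, 0)), Or.inr ⟨i, mem_univ _, rfl⟩,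
            attach_adj_rr.mpr (star_adj.mpr
              ⟨fun hh => (by decide : ¬((0 : Fin 2) = 1))
                (congrArg Prod.snd (Option.some_injective _ hh)), Or.inl ⟨rfl, rfl, rfl⟩⟩)⟩
    · rintro x ⟨i, -, rfl⟩
      obtain ⟨i', hne⟩ : ∃ i' : Fin t, i' ≠ i := exists_ne i
      refine ⟨Sum.inr (some (i', 0)), Or.inr ⟨i', mem_univ _, rfl⟩, ?_,
        Or.inr ⟨Sum.inr none, ?_, ?_⟩⟩
      · intro h
        exact hne (congrArg Prod.fst (Option.some_injective _ (Sum.inr_injective h)))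
      · exact attach_adj_rr.mpr (star_adj.mpr ⟨Option.some_ne_none _, Or.inr rfl⟩)
      · exact attach_adj_rr.mpr (star_adj.mpr ⟨fun h => (Option.some_ne_none _) h.symm,
          Or.inl rfl⟩)
  have hNcard : N.ncard = t := by
    rw [hN, Set.ncard_image_of_injective _ hinj, Set.ncard_univ, Nat.card_eq_fintype_card,
      Fintype.card_fin]
  have hcard : (Sum.inl '' S ∪ N).ncard = S.ncard + t := by
    have hdisj : Disjoint (Sum.inl '' S : Set (V ⊕ Option (Fin t × Fin 2))) N := by
      rw [Set.disjoint_left]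
      rintro x ⟨a, -, rfl⟩ ⟨i, -, h⟩
      exact Sum.inl_ne_inr h.symm
    rw [Set.ncard_union_eq hdisj (Set.toFinite _) (Set.toFinite _), inl_image_ncard, hNcard]
  have hup : dominationNumber A ≤ S.ncard + t := by
    have h := domN_le hsem.1
    rw [hcard] at h; exact h
  have hlow : dominationNumber G + t ≤ dominationNumber A := by
    obtain ⟨D, hD, hcD⟩ := exists_dom_min A
    rw [← hcD]
    set f : Fin t → Option (Fin t × Fin 2) :=
      fun i => if Sum.inr (some (i, 0)) ∈ D then some (i, 0) else some (i, 1) with hf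
    have hfR : ∀ i, Sum.inr (f i) ∈ D := by
      intro i
      rw [hf]
      by_cases hm : Sum.inr (some (i, 0)) ∈ D
      · simp only [if_pos hm]; exact hm
      · simp only [if_neg hm]
        by_cases hl : Sum.inr (some (i, 1)) ∈ D
        · exact hl
        · obtain ⟨x, hx, hadj⟩ := hD _ hl
          rcases x with a | b
          · exact absurd (attach_adj_lr.mp hadj).2 (by simp)
          · have hb := star_leaf_adj (attach_adj_rr.mp hadj)
            rw [hb] at hx
            exact absurd hx hm
    have hfex : ∀ i, ∃ c : Fin 2, f i = some (i, c) := by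
      intro i
      rw [hf]
      by_cases hm : Sum.inr (some (i, 0)) ∈ D
      · exact ⟨0, by simp only [if_pos hm]⟩
      · exact ⟨1, by simp only [if_neg hm]⟩
    have hfinj : Function.Injective f := by
      intro i j h
      obtain ⟨ci, hi⟩ := hfex i
      obtain ⟨cj, hj⟩ := hfex j
      rw [hi, hj] at h
      exact congrArg Prod.fst (Option.some_injective _ h)
    have hfsub : f '' Set.univ ⊆ Sum.inr ⁻¹' D := by
      rintro x ⟨i, -, rfl⟩; exact hfR i
    have hfcard : (f '' Set.univ).ncard = t := by
      rw [Set.ncard_image_of_injective _ hfinj, Set.ncard_univ, Nat.card_eq_fintype_card,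
        Fintype.card_fin]
    have hsum := preimage_ncard_sum_le D
    by_cases hnone : Sum.inr (none : Option (Fin t × Fin 2)) ∈ D
    · have hsub2 : insert none (f '' Set.univ) ⊆ Sum.inr ⁻¹' D :=
        Set.insert_subset hnone hfsub
      have hnm : (none : Option (Fin t × Fin 2)) ∉ f '' Set.univ := by
        rintro ⟨i, -, h⟩
        obtain ⟨c, hcc⟩ := hfex i
        rw [hcc] at h
        exact Option.some_ne_none _ h
      have hR1 : t + 1 ≤ (Sum.inr ⁻¹' D : Set (Option (Fin t × Fin 2))).ncard := by
        have h := Set.ncard_le_ncard hsub2 (Set.toFinite _)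
        rwa [Set.ncard_insert_of_notMem hnm (Set.toFinite _), hfcard] at h
      have hA1 : almostDominationNumber G v ≤ (Sum.inl ⁻¹' D).ncard :=
        almostN_le (pullback_almost hD)
      have hA2 := domN_le_almost_add_one G v
      omega
    · have hdomG : dominationNumber G ≤ (Sum.inl ⁻¹' D).ncard :=
        domN_le (pullback_dom_of_not hD hnone)
      have hR1 : t ≤ (Sum.inr ⁻¹' D : Set (Option (Fin t × Fin 2))).ncard := by
        have h := Set.ncard_le_ncard hfsub (Set.toFinite _)
        rwa [hfcard] at h
      omega
  refine ⟨inferInstance, _, hsem, ?_⟩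
  rw [hcard, hc]
  omega

end op3
section op4
variable {V : Type} {G : SimpleGraph V}

lemma ytree_adj {x y : Fin 5} : Ytree.Adj x y ↔ x ≠ y ∧
    (((x = 0 ∧ y = 1) ∨ (x = 0 ∧ y = 2) ∨ (x = 0 ∧ y = 3) ∨ (x = 3 ∧ y = 4)) ∨
     ((y = 0 ∧ x = 1) ∨ (y = 0 ∧ x = 2) ∨ (y = 0 ∧ x = 3) ∨ (y = 3 ∧ x = 4))) := by
  rw [Ytree, SimpleGraph.fromRel_adj]

lemma good_op4 (v : V) (hG : Good G) : Good (attach G Ytree v 1) := by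
  haveI : Finite V := hG.1
  obtain ⟨-, S, hS, hc⟩ := hG
  set A := attach G Ytree v 1 with hA
  have hsem : IsSemitotalDominatingSet A (Sum.inl '' S ∪ {Sum.inr 0, Sum.inr 3}) := by
    refine semitotal_extend hS {Sum.inr 0, Sum.inr 3} ?_ ?_ ?_
    · rintro x (rfl | rfl) <;> exact ⟨_, rfl⟩
    · intro b
      rcases fin5_cases b with rfl | rfl | rfl | rfl | rfl
      · exact Or.inl (Or.inr (Or.inl rfl))
      · exact Or.inr ⟨Sum.inr 0, Or.inr (Or.inl rfl),
          attach_adj_rr.mpr (ytree_adj.mpr (by decide))⟩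
      · exact Or.inr ⟨Sum.inr 0, Or.inr (Or.inl rfl),
          attach_adj_rr.mpr (ytree_adj.mpr (by decide))⟩
      · exact Or.inl (Or.inr (Or.inr rfl))
      · exact Or.inr ⟨Sum.inr 3, Or.inr (Or.inr rfl),
          attach_adj_rr.mpr (ytree_adj.mpr (by decide))⟩
    · rintro x (rfl | rfl)
      · exact ⟨Sum.inr 3, Or.inr (Or.inr rfl),
          fun h => (by decide : ¬((3 : Fin 5) = 0)) (Sum.inr_injective h),
          Or.inl (attach_adj_rr.mpr (ytree_adj.mpr (by decide)))⟩
      · exact ⟨Sum.inr 0, Or.inr (Or.inl rfl),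
          fun h => (by decide : ¬((0 : Fin 5) = 3)) (Sum.inr_injective h),
          Or.inl (attach_adj_rr.mpr (ytree_adj.mpr (by decide)))⟩
  have hset : (Sum.inl '' S ∪ {Sum.inr 0, Sum.inr 3} : Set (V ⊕ Fin 5)) =
      insert (Sum.inr 0) (insert (Sum.inr 3) (Sum.inl '' S)) := by
    rw [Set.union_insert, Set.union_singleton]
  have hn1 : (Sum.inr 0 : V ⊕ Fin 5) ∉ insert (Sum.inr 3) (Sum.inl '' S) := by
    rintro (h | h)
    · exact (by decide : ¬((0 : Fin 5) = 3)) (Sum.inr_injective h)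
    · exact inr_not_mem_inl_image 0 h
  have hcard : (Sum.inl '' S ∪ {Sum.inr 0, Sum.inr 3} : Set (V ⊕ Fin 5)).ncard
      = S.ncard + 2 := by
    rw [hset, Set.ncard_insert_of_notMem hn1 (Set.toFinite _),
      Set.ncard_insert_of_notMem (inr_not_mem_inl_image 3) (Set.toFinite _), inl_image_ncard]
  have hup : dominationNumber A ≤ S.ncard + 2 := by
    have h := domN_le hsem.1
    rw [hcard] at h; exact h
  have hlow : dominationNumber G + 2 ≤ dominationNumber A := by
    obtain ⟨D, hD, hcD⟩ := exists_dom_min A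
    rw [← hcD]
    have ha : ∃ a ∈ (Sum.inr ⁻¹' D : Set (Fin 5)), a = 0 ∨ a = 2 := by
      by_cases hm : Sum.inr 2 ∈ D
      · exact ⟨2, hm, Or.inr rfl⟩
      · obtain ⟨x, hx, hadj⟩ := hD _ hm
        rcases x with a | b
        · exact absurd (attach_adj_lr.mp hadj).2 (by decide)
        · refine ⟨b, hx, ?_⟩
          have h := attach_adj_rr.mp hadj
          rw [ytree_adj] at h
          revert h
          rcases fin5_cases b with rfl | rfl | rfl | rfl | rfl <;> decide
    have hb : ∃ b ∈ (Sum.inr ⁻¹' D : Set (Fin 5)), b = 3 ∨ b = 4 := by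
      by_cases hm : Sum.inr 4 ∈ D
      · exact ⟨4, hm, Or.inr rfl⟩
      · obtain ⟨x, hx, hadj⟩ := hD _ hm
        rcases x with a | b
        · exact absurd (attach_adj_lr.mp hadj).2 (by decide)
        · refine ⟨b, hx, ?_⟩
          have h := attach_adj_rr.mp hadj
          rw [ytree_adj] at h
          revert h
          rcases fin5_cases b with rfl | rfl | rfl | rfl | rfl <;> decide
    obtain ⟨a, haD, hav⟩ := ha
    obtain ⟨b, hbD, hbv⟩ := hb
    have hab : a ≠ b := by
      rcases hav with rfl | rfl <;> rcases hbv with rfl | rfl <;> decide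
    have hsum := preimage_ncard_sum_le D
    by_cases h1m : Sum.inr (1 : Fin 5) ∈ D
    · have hsub : {(1 : Fin 5), a, b} ⊆ (Sum.inr ⁻¹' D : Set (Fin 5)) := by
        rintro x (rfl | rfl | rfl)
        exacts [h1m, haD, hbD]
      have h3card : ({(1 : Fin 5), a, b} : Set (Fin 5)).ncard = 3 := by
        have h1a : (1 : Fin 5) ∉ ({a, b} : Set (Fin 5)) := by
          rintro (rfl | rfl)
          · rcases hav with h | h <;> exact (by decide : ¬((1:Fin 5) = _)) h
          · rcases hbv with h | h <;> exact (by decide : ¬((1:Fin 5) = _)) h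
        have hab' : a ∉ ({b} : Set (Fin 5)) := fun h => hab h
        rw [Set.ncard_insert_of_notMem h1a (Set.toFinite _),
          Set.ncard_insert_of_notMem hab' (Set.toFinite _), Set.ncard_singleton]
      have hR1 : 3 ≤ (Sum.inr ⁻¹' D : Set (Fin 5)).ncard := by
        have h := Set.ncard_le_ncard hsub (Set.toFinite _)
        rwa [h3card] at h
      have hA1 : almostDominationNumber G v ≤ (Sum.inl ⁻¹' D).ncard :=
        almostN_le (pullback_almost hD)
      have hA2 := domN_le_almost_add_one G v
      omega
    · have hdomG : dominationNumber G ≤ (Sum.inl ⁻¹' D).ncard :=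
        domN_le (pullback_dom_of_not hD h1m)
      have hR1 : 1 < (Sum.inr ⁻¹' D : Set (Fin 5)).ncard :=
        (Set.one_lt_ncard (Set.toFinite _)).mpr ⟨a, haD, b, hbD, hab⟩
      omega
  refine ⟨inferInstance, _, hsem, ?_⟩
  rw [hcard, hc]
  omega

end op4
lemma oFamily_good {V : Type} {G : SimpleGraph V} (h : OFamily G) : Good G := by
  induction h with
  | base => exact good_base
  | op1 v hv h ih => exact good_op1 v hv ih
  | op2short v hv h ih => exact good_op2short v hv ih
  | op2long v hv h ih => exact good_op2long v hv ih
  | op3 v t ht h ih => exact good_op3 v t ht ih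
  | op4 v h ih => exact good_op4 v ih
  | iso e h ih => exact good_iso e ih

/-- If a tree `T` belongs to the family `𝒪`, then `γ(T) = γ_t2(T)`. -/
theorem oFamily_domination_eq_semitotal {V : Type} [Fintype V] (T : SimpleGraph V)
    (hT : T.IsTree) (h : OFamily T) :
    dominationNumber T = semitotalDominationNumber T :=
  (oFamily_good h).eq
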